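/- Let Q = (Q₁, Q₂) with Q̄ᵢ := Qᵢ − Qᵢ(θ=0) ≤ 0 pointwise on [0, π/2]. Suppose (Q₁(t), Q₂(t)) evolve by ∂_t Q₁ + 2sin(2θ)∂_θ Q₁ + 6Q₁ = Q₂ and ∂_t Q₂ + 2sin(2θ)∂_θ Q₂ + 9Q₂ = 130 cos²θ(Q₁ − ⨍Q₁). Then the non-positivity of Q̄₁ and Q̄₂ is preserved in time: if Q̄₁(0,·) ≤ 0 and Q̄₂(0,·) ≤ 0, then Q̄₁(t,·) ≤ 0 and Q̄₂(t,·) ≤ 0 for all t ≥ 0. -/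

import Mathlib

open Real Set MeasureTheory Filter Topology

lemma aux_deriv_nonneg {g : ℝ → ℝ} {d t₀ : ℝ} (hg : HasDerivAt g d t₀) (ht₀ : 0 < t₀)
    (hneg : ∀ s, 0 ≤ s → s < t₀ → g s ≤ 0) (h0 : g t₀ = 0) : 0 ≤ d := by
  have hs := hasDerivAt_iff_tendsto_slope.mp hg
  have h2 : Tendsto (slope g t₀) (𝓝[<] t₀) (𝓝 d) :=
    hs.mono_left (nhdsWithin_mono _ fun x hx => ne_of_lt hx)
  refine ge_of_tendsto h2 ?_
  filter_upwards [Ioo_mem_nhdsLT_of_mem (⟨ht₀, le_rfl⟩ : t₀ ∈ Ioc (0:ℝ) t₀)] with s hs'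
  rw [slope_def_field, h0]
  have := hneg s hs'.1.le hs'.2
  apply div_nonneg_of_nonpos <;> linarith [hs'.2]


/-- Preservation of non-positivity for the angular system: if `Q̄ᵢ(0,·) ≤ 0` on `[0,π/2]`
(where `Q̄ᵢ(t,θ) = Qᵢ(t,θ) − Qᵢ(t,0)`), then `Q̄ᵢ(t,·) ≤ 0` for all `t ≥ 0`. -/
theorem stmt14 (Q₁ Q₂ : ℝ → ℝ → ℝ)
    (hreg1 : ContDiff ℝ 1 (fun p : ℝ × ℝ => Q₁ p.1 p.2))
    (hreg2 : ContDiff ℝ 1 (fun p : ℝ × ℝ => Q₂ p.1 p.2))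
    (heq1 : ∀ t θ, deriv (fun s => Q₁ s θ) t
      + 2 * Real.sin (2*θ) * deriv (fun φ => Q₁ t φ) θ + 6 * Q₁ t θ = Q₂ t θ)
    (heq2 : ∀ t θ, deriv (fun s => Q₂ s θ) t
      + 2 * Real.sin (2*θ) * deriv (fun φ => Q₂ t φ) θ + 9 * Q₂ t θ
      = 130 * (Real.cos θ)^2 * (Q₁ t θ - (2/π) * ∫ φ in (0:ℝ)..(π/2), Q₁ t φ))
    (hinit1 : ∀ θ ∈ Icc (0:ℝ) (π/2), Q₁ 0 θ - Q₁ 0 0 ≤ 0)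
    (hinit2 : ∀ θ ∈ Icc (0:ℝ) (π/2), Q₂ 0 θ - Q₂ 0 0 ≤ 0) :
    ∀ t ≥ (0:ℝ), ∀ θ ∈ Icc (0:ℝ) (π/2),
      Q₁ t θ - Q₁ t 0 ≤ 0 ∧ Q₂ t θ - Q₂ t 0 ≤ 0 := by
  have hc1 : Continuous (fun p : ℝ × ℝ => Q₁ p.1 p.2) := hreg1.continuous
  have hc2 : Continuous (fun p : ℝ × ℝ => Q₂ p.1 p.2) := hreg2.continuous
  have hd1 : ∀ θ : ℝ, Differentiable ℝ (fun s => Q₁ s θ) := fun θ =>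
    (hreg1.differentiable one_ne_zero).comp (differentiable_id.prodMk (differentiable_const θ))
  have hd2 : ∀ θ : ℝ, Differentiable ℝ (fun s => Q₂ s θ) := fun θ =>
    (hreg2.differentiable one_ne_zero).comp (differentiable_id.prodMk (differentiable_const θ))
  have hct1 : ∀ θ : ℝ, Continuous (fun s => Q₁ s θ) := fun θ =>
    hc1.comp (continuous_id.prodMk continuous_const)
  have hct2 : ∀ θ : ℝ, Continuous (fun s => Q₂ s θ) := fun θ =>
    hc2.comp (continuous_id.prodMk continuous_const)
  have hcθ1 : ∀ s : ℝ, Continuous (fun θ => Q₁ s θ) := fun s =>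
    hc1.comp (continuous_const.prodMk continuous_id)
  intro t ht
  have key : ∀ ε > (0:ℝ), ∀ θ ∈ Icc (0:ℝ) (π/2),
      Q₁ t θ - Q₁ t 0 < ε * Real.exp (300 * t) ∧
      Q₂ t θ - Q₂ t 0 < ε * Real.exp (300 * t) := by
    intro ε hε
    set B : Set (ℝ × ℝ) := {p : ℝ × ℝ | p.1 ∈ Icc 0 t ∧ p.2 ∈ Icc (0:ℝ) (π/2) ∧
        (ε * Real.exp (300 * p.1) ≤ Q₁ p.1 p.2 - Q₁ p.1 0 ∨
         ε * Real.exp (300 * p.1) ≤ Q₂ p.1 p.2 - Q₂ p.1 0)} with hB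
    set A : Set ℝ := Prod.fst '' B with hA
    have hAmem : ∀ s, s ∈ A ↔ (s ∈ Icc 0 t ∧ ∃ θ ∈ Icc (0:ℝ) (π/2),
        ε * Real.exp (300 * s) ≤ Q₁ s θ - Q₁ s 0 ∨
        ε * Real.exp (300 * s) ≤ Q₂ s θ - Q₂ s 0) := by
      intro s
      constructor
      · rintro ⟨⟨s', θ'⟩, ⟨h1, h2, h3⟩, rfl⟩
        exact ⟨h1, θ', h2, h3⟩
      · rintro ⟨h1, θ', h2, h3⟩
        exact ⟨(s, θ'), ⟨h1, h2, h3⟩, rfl⟩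
    have hAempty : A = ∅ := by
      by_contra hne
      rw [← Ne, ← nonempty_iff_ne_empty] at hne
      have hBclosed : IsClosed B := by
        apply IsClosed.inter (isClosed_Icc.preimage continuous_fst)
        apply IsClosed.inter (isClosed_Icc.preimage continuous_snd)
        apply IsClosed.union
        · exact isClosed_le (by fun_prop) ((hc1.sub (hc1.comp
            (continuous_fst.prodMk continuous_const))))
        · exact isClosed_le (by fun_prop) ((hc2.sub (hc2.comp
            (continuous_fst.prodMk continuous_const))))
      have hBcomp : IsCompact B :=
        (isCompact_Icc.prod isCompact_Icc).of_isClosed_subset hBclosed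
          (fun p hp => ⟨hp.1, hp.2.1⟩)
      have hAcomp : IsCompact A := hBcomp.image continuous_fst
      set t₀ : ℝ := sInf A with ht₀def
      have ht₀mem : t₀ ∈ A := hAcomp.sInf_mem hne
      have ht₀lb : ∀ s ∈ A, t₀ ≤ s := fun s hs => csInf_le hAcomp.bddBelow hs
      rw [hAmem] at ht₀mem
      obtain ⟨⟨ht₀0, ht₀t⟩, θs, hθs, hcase⟩ := ht₀mem
      have hEpos : 0 < ε * Real.exp (300 * t₀) := mul_pos hε (Real.exp_pos _)
      have ht₀pos : 0 < t₀ := by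
        rcases lt_or_eq_of_le ht₀0 with h | h
        · exact h
        · exfalso
          rw [← h] at hcase
          have h1 := hinit1 θs hθs
          have h2 := hinit2 θs hθs
          rcases hcase with hc | hc <;>
            · rw [mul_zero, Real.exp_zero, mul_one] at hc; linarith
      have hbefore : ∀ s, 0 ≤ s → s < t₀ → ∀ θ ∈ Icc (0:ℝ) (π/2),
          Q₁ s θ - Q₁ s 0 < ε * Real.exp (300 * s) ∧
          Q₂ s θ - Q₂ s 0 < ε * Real.exp (300 * s) := by
        intro s hs0 hst θ hθ
        have hsA : s ∉ A := fun hc => absurd (ht₀lb s hc) (not_le.mpr hst)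
        rw [hAmem] at hsA
        push_neg at hsA
        have := hsA ⟨hs0, hst.le.trans ht₀t⟩ θ hθ
        exact this
      have hupper : ∀ θ ∈ Icc (0:ℝ) (π/2),
          Q₁ t₀ θ - Q₁ t₀ 0 ≤ ε * Real.exp (300 * t₀) ∧
          Q₂ t₀ θ - Q₂ t₀ 0 ≤ ε * Real.exp (300 * t₀) := by
        intro θ hθ
        have hlim : ∀ (f : ℝ → ℝ), Continuous f →
            (∀ s, 0 ≤ s → s < t₀ → f s < ε * Real.exp (300 * s)) →
            f t₀ ≤ ε * Real.exp (300 * t₀) := by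
          intro f hf hfs
          have htd : Tendsto (fun s => f s - ε * Real.exp (300 * s)) (𝓝[<] t₀)
              (𝓝 (f t₀ - ε * Real.exp (300 * t₀))) :=
            ((hf.sub (by fun_prop)).tendsto t₀).mono_left nhdsWithin_le_nhds
          have hle : f t₀ - ε * Real.exp (300 * t₀) ≤ 0 := by
            refine le_of_tendsto htd ?_
            filter_upwards [Ioo_mem_nhdsLT_of_mem
              (⟨ht₀pos, le_rfl⟩ : t₀ ∈ Ioc (0:ℝ) t₀)] with s hs
            linarith [hfs s hs.1.le hs.2]
          linarith
        constructor
        · exact hlim _ ((hct1 θ).sub (hct1 0)) (fun s h1 h2 => (hbefore s h1 h2 θ hθ).1)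
        · exact hlim _ ((hct2 θ).sub (hct2 0)) (fun s h1 h2 => (hbefore s h1 h2 θ hθ).2)
      -- the exponential derivative
      have hexp : HasDerivAt (fun s => ε * Real.exp (300 * s))
          (ε * (Real.exp (300 * t₀) * 300)) t₀ := by
        have h1 : HasDerivAt (fun s : ℝ => 300 * s) 300 t₀ := by
          simpa using (hasDerivAt_id t₀).const_mul 300
        exact h1.exp.const_mul ε
      rcases hcase with h1 | h1
      · -- case Q₁ touches
        have hueq : Q₁ t₀ θs - Q₁ t₀ 0 = ε * Real.exp (300 * t₀) :=
          le_antisymm (hupper θs hθs).1 h1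
        have hθs0 : 0 < θs := by
          rcases lt_or_eq_of_le hθs.1 with h | h
          · exact h
          · exfalso; rw [← h, sub_self] at hueq; linarith
        have htr : 2 * Real.sin (2*θs) * deriv (fun φ => Q₁ t₀ φ) θs = 0 := by
          rcases lt_or_eq_of_le hθs.2 with hlt | heqr
          · have hmax : IsLocalMax (fun φ => Q₁ t₀ φ) θs := by
              filter_upwards [Icc_mem_nhds hθs0 hlt] with φ hφ
              have := (hupper φ hφ).1
              show Q₁ t₀ φ ≤ Q₁ t₀ θs; linarith
            rw [hmax.deriv_eq_zero]; ring
          · rw [heqr, show (2:ℝ) * (π/2) = π by ring, Real.sin_pi]; ring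
        set d : ℝ := deriv (fun s => Q₁ s θs) t₀ - deriv (fun s => Q₁ s 0) t₀
          - ε * (Real.exp (300 * t₀) * 300) with hd
        have hgd : HasDerivAt (fun s => Q₁ s θs - Q₁ s 0 - ε * Real.exp (300 * s)) d t₀ :=
          (((hd1 θs t₀).hasDerivAt.sub (hd1 0 t₀).hasDerivAt)).sub hexp
        have hd0 : 0 ≤ d := by
          refine aux_deriv_nonneg hgd ht₀pos (fun s hs1 hs2 => ?_) (by linarith)
          linarith [(hbefore s hs1 hs2 θs hθs).1]
        have e1 := heq1 t₀ θs
        have e2 := heq1 t₀ 0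
        rw [show (2:ℝ) * 0 = 0 by ring, Real.sin_zero] at e2
        have hv := (hupper θs hθs).2
        have hdval : d = deriv (fun s => Q₁ s θs) t₀ - deriv (fun s => Q₁ s 0) t₀
          - ε * (Real.exp (300 * t₀) * 300) := hd
        nlinarith [hd0, e1, e2, htr, hv, hueq, hEpos]
      · -- case Q₂ touches
        have hveq : Q₂ t₀ θs - Q₂ t₀ 0 = ε * Real.exp (300 * t₀) :=
          le_antisymm (hupper θs hθs).2 h1
        have hθs0 : 0 < θs := by
          rcases lt_or_eq_of_le hθs.1 with h | h
          · exact h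
          · exfalso; rw [← h, sub_self] at hveq; linarith
        have htr : 2 * Real.sin (2*θs) * deriv (fun φ => Q₂ t₀ φ) θs = 0 := by
          rcases lt_or_eq_of_le hθs.2 with hlt | heqr
          · have hmax : IsLocalMax (fun φ => Q₂ t₀ φ) θs := by
              filter_upwards [Icc_mem_nhds hθs0 hlt] with φ hφ
              have := (hupper φ hφ).2
              show Q₂ t₀ φ ≤ Q₂ t₀ θs; linarith
            rw [hmax.deriv_eq_zero]; ring
          · rw [heqr, show (2:ℝ) * (π/2) = π by ring, Real.sin_pi]; ring
        -- integral bound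
        have hπ : (0:ℝ) < π := Real.pi_pos
        have hintle : ∫ φ in (0:ℝ)..(π/2), Q₁ t₀ φ
            ≤ ∫ φ in (0:ℝ)..(π/2), (Q₁ t₀ 0 + ε * Real.exp (300 * t₀)) := by
          apply intervalIntegral.integral_mono_on (by positivity)
          · exact (hcθ1 t₀).intervalIntegrable _ _
          · exact intervalIntegrable_const
          · intro φ hφ
            linarith [(hupper φ hφ).1]
        rw [intervalIntegral.integral_const, smul_eq_mul] at hintle
        have hint : (2/π) * ∫ φ in (0:ℝ)..(π/2), Q₁ t₀ φ
            ≤ Q₁ t₀ 0 + ε * Real.exp (300 * t₀) := by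
          have h2 : (2/π) * ∫ φ in (0:ℝ)..(π/2), Q₁ t₀ φ
              ≤ (2/π) * ((π/2 - 0) * (Q₁ t₀ 0 + ε * Real.exp (300 * t₀))) :=
            mul_le_mul_of_nonneg_left hintle (by positivity)
          calc (2/π) * ∫ φ in (0:ℝ)..(π/2), Q₁ t₀ φ
              ≤ (2/π) * ((π/2 - 0) * (Q₁ t₀ 0 + ε * Real.exp (300 * t₀))) := h2
            _ = Q₁ t₀ 0 + ε * Real.exp (300 * t₀) := by field_simp; ring
        set d : ℝ := deriv (fun s => Q₂ s θs) t₀ - deriv (fun s => Q₂ s 0) t₀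
          - ε * (Real.exp (300 * t₀) * 300) with hd
        have hgd : HasDerivAt (fun s => Q₂ s θs - Q₂ s 0 - ε * Real.exp (300 * s)) d t₀ :=
          (((hd2 θs t₀).hasDerivAt.sub (hd2 0 t₀).hasDerivAt)).sub hexp
        have hd0 : 0 ≤ d := by
          refine aux_deriv_nonneg hgd ht₀pos (fun s hs1 hs2 => ?_) (by linarith)
          linarith [(hbefore s hs1 hs2 θs hθs).2]
        have e1 := heq2 t₀ θs
        have e2 := heq2 t₀ 0
        rw [show (2:ℝ) * 0 = 0 by ring, Real.sin_zero, Real.cos_zero] at e2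
        have hu := (hupper θs hθs).1
        have hc0 : (0:ℝ) ≤ Real.cos θs ^ 2 := sq_nonneg _
        have hc1' : Real.cos θs ^ 2 ≤ 1 := by
          nlinarith [Real.cos_le_one θs, Real.neg_one_le_cos θs]
        set I : ℝ := (2/π) * ∫ φ in (0:ℝ)..(π/2), Q₁ t₀ φ with hI
        set c : ℝ := Real.cos θs ^ 2 with hc
        set E : ℝ := ε * Real.exp (300 * t₀) with hEdef
        -- from e1, e2, htr :
        -- d = 130*c*(Q₁ t₀ θs - I) - 130*(Q₁ t₀ 0 - I) - 9*(Q₂ t₀ θs - Q₂ t₀ 0) - 300*E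
        -- with Q₂ diff = E, Q₁ t₀ θs - Q₁ t₀ 0 ≤ E (hu), Q₁ t₀ 0 - I ≥ -E (hint)
        nlinarith [hd0, e1, e2, htr, hu, hveq, hint, hEpos, hc0, hc1',
          mul_nonneg (sub_nonneg.mpr hc1') (by linarith : (0:ℝ) ≤ (Q₁ t₀ 0 - I) + E),
          mul_nonneg hc0 (by linarith : (0:ℝ) ≤ E - (Q₁ t₀ θs - Q₁ t₀ 0)),
          mul_nonneg (sub_nonneg.mpr hc1') hEpos.le]
    -- A empty: conclude for t
    intro θ hθ
    have htA : t ∉ A := by rw [hAempty]; exact notMem_empty t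
    rw [hAmem] at htA
    push_neg at htA
    have := htA ⟨le_refl 0 |>.trans ht, le_refl t⟩ θ hθ
    exact this
  intro θ hθ
  constructor
  · by_contra hcon
    push_neg at hcon
    set u := Q₁ t θ - Q₁ t 0 with hu
    have hεp : 0 < u / (2 * Real.exp (300 * t)) := by positivity
    have := (key _ hεp θ hθ).1
    rw [div_mul_eq_mul_div, mul_comm] at this
    have hex := Real.exp_pos (300 * t)
    rw [show Real.exp (300*t) * u / (2 * Real.exp (300*t)) = u / 2 by field_simp]
      at this
    linarith
  · by_contra hcon
    push_neg at hcon
    set u := Q₂ t θ - Q₂ t 0 with hu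
    have hεp : 0 < u / (2 * Real.exp (300 * t)) := by positivity
    have := (key _ hεp θ hθ).2
    rw [div_mul_eq_mul_div, mul_comm] at this
    have hex := Real.exp_pos (300 * t)
    rw [show Real.exp (300*t) * u / (2 * Real.exp (300*t)) = u / 2 by field_simp]
      at this
    linarith
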